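/- Let Z ∈ [0,1] be a random variable with mean z, and let x̄ > 0 with z ≤ x̄, θ > 0. Then E[exp(2θ·Z/(x̄ + θ))] ≤ exp(2θ·z/x̄). -/

import Mathlib

open MeasureTheory

lemma aux_hasDeriv (s : ℝ) (hs : 0 < s) :
    HasDerivAt (fun x => Real.log (1 + x) - 2 * x / (2 + x))
      (1 / (1 + s) - 4 / (2 + s) ^ 2) s := by
  have h1 : HasDerivAt (fun x : ℝ => 1 + x) 1 s := (hasDerivAt_id s).const_add 1
  have h2 : HasDerivAt (fun x => Real.log (1 + x)) (1 / (1 + s)) s := by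
    have := h1.log (by linarith)
    simpa using this
  have h3 : HasDerivAt (fun x : ℝ => 2 * x) 2 s := by
    simpa using (hasDerivAt_id s).const_mul 2
  have h4 : HasDerivAt (fun x : ℝ => 2 + x) 1 s := (hasDerivAt_id s).const_add 2
  have h5 : HasDerivAt (fun x : ℝ => 2 * x / (2 + x))
      ((2 * (2 + s) - 2 * s * 1) / (2 + s) ^ 2) s := h3.div h4 (by linarith)
  have he : 2 * (2 + s) - 2 * s * 1 = 4 := by ring
  rw [he] at h5
  exact h2.sub h5

lemma key_log (s : ℝ) (hs : 0 ≤ s) : 2 * s / (2 + s) ≤ Real.log (1 + s) := by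
  have hmono : MonotoneOn (fun x => Real.log (1 + x) - 2 * x / (2 + x)) (Set.Ici (0:ℝ)) := by
    apply monotoneOn_of_deriv_nonneg (convex_Ici 0)
    · apply ContinuousOn.sub
      · apply ContinuousOn.log (by fun_prop)
        intro x hx
        simp only [Set.mem_Ici] at hx
        linarith
      · apply ContinuousOn.div (by fun_prop) (by fun_prop)
        intro x hx
        simp only [Set.mem_Ici] at hx
        linarith
    · intro x hx
      rw [interior_Ici] at hx
      exact (aux_hasDeriv x hx).differentiableAt.differentiableWithinAt
    · intro x hx
      rw [interior_Ici] at hx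
      rw [(aux_hasDeriv x hx).deriv]
      have h1 : (0:ℝ) < 1 + x := by linarith [Set.mem_Ioi.mp hx]
      have h2 : (0:ℝ) < (2 + x) ^ 2 := by nlinarith [Set.mem_Ioi.mp hx]
      rw [sub_nonneg, div_le_div_iff₀ h2 h1]
      nlinarith [Set.mem_Ioi.mp hx]
  have h0 : (fun x => Real.log (1 + x) - 2 * x / (2 + x)) 0 ≤
      (fun x => Real.log (1 + x) - 2 * x / (2 + x)) s :=
    hmono (Set.self_mem_Ici) hs hs
  simp only [add_zero, Real.log_one, mul_zero, zero_div, sub_zero] at h0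
  linarith [h0]

lemma pointwise_bound (t xbar θ : ℝ) (ht0 : 0 ≤ t) (ht1 : t ≤ 1) (hx : 0 < xbar)
    (hθ : 0 < θ) : Real.exp (2 * θ * t / (xbar + θ)) ≤ 1 + 2 * θ * t / xbar := by
  set s := 2 * θ * t / xbar with hs_def
  have hs : 0 ≤ s := by positivity
  have heq : 2 * s / (2 + s) = 2 * θ * t / (xbar + θ * t) := by
    rw [hs_def]
    have h1 : xbar + θ * t > 0 := by positivity
    field_simp
  have h2 : 2 * θ * t / (xbar + θ) ≤ 2 * θ * t / (xbar + θ * t) := by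
    gcongr
    nlinarith
  calc Real.exp (2 * θ * t / (xbar + θ))
      ≤ Real.exp (2 * s / (2 + s)) := by rw [heq]; exact Real.exp_le_exp.mpr h2
    _ ≤ Real.exp (Real.log (1 + s)) := Real.exp_le_exp.mpr (key_log s hs)
    _ = 1 + s := Real.exp_log (by linarith)

theorem stmt_13 {Ω : Type*} [MeasurableSpace Ω] (μ : Measure Ω) [IsProbabilityMeasure μ]
    (Z : Ω → ℝ) (hZmeas : Measurable Z) (hZ : ∀ ω, Z ω ∈ Set.Icc (0 : ℝ) 1)
    (z xbar θ : ℝ) (hz : (∫ ω, Z ω ∂μ) = z) (hzx : z ≤ xbar) (hx : 0 < xbar) (hθ : 0 < θ) :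
    (∫ ω, Real.exp (2 * θ * Z ω / (xbar + θ)) ∂μ) ≤ Real.exp (2 * θ * z / xbar) := by
  have hxθ : 0 < xbar + θ := by linarith
  have hintZ : Integrable Z μ := by
    apply Integrable.mono' (integrable_const (1:ℝ)) hZmeas.aestronglyMeasurable
    filter_upwards with ω
    rw [Real.norm_eq_abs, abs_le]
    exact ⟨by linarith [(hZ ω).1], (hZ ω).2⟩
  have hmeas2 : Measurable fun ω => Real.exp (2 * θ * Z ω / (xbar + θ)) := by
    apply Measurable.exp
    exact (hZmeas.const_mul (2 * θ)).div_const _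
  have hint2 : Integrable (fun ω => Real.exp (2 * θ * Z ω / (xbar + θ))) μ := by
    apply Integrable.mono' (integrable_const (Real.exp (2 * θ / (xbar + θ))))
      hmeas2.aestronglyMeasurable
    filter_upwards with ω
    rw [Real.norm_eq_abs, abs_of_pos (Real.exp_pos _)]
    apply Real.exp_le_exp.mpr
    gcongr ?_ / _
    nlinarith [(hZ ω).1, (hZ ω).2]
  have hint3 : Integrable (fun ω => 1 + 2 * θ * Z ω / xbar) μ := by
    apply (integrable_const (1:ℝ)).add
    have : (fun ω => 2 * θ * Z ω / xbar) = fun ω => (2 * θ / xbar) * Z ω := by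
      funext ω; ring
    rw [this]
    exact hintZ.const_mul _
  have hmono : (∫ ω, Real.exp (2 * θ * Z ω / (xbar + θ)) ∂μ) ≤
      ∫ ω, (1 + 2 * θ * Z ω / xbar) ∂μ := by
    apply integral_mono hint2 hint3
    intro ω
    exact pointwise_bound (Z ω) xbar θ (hZ ω).1 (hZ ω).2 hx hθ
  have hcalc : (∫ ω, (1 + 2 * θ * Z ω / xbar) ∂μ) = 1 + 2 * θ * z / xbar := by
    have h1 : (fun ω => 1 + 2 * θ * Z ω / xbar) = fun ω => 1 + (2 * θ / xbar) * Z ω := by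
      funext ω; ring
    rw [h1, integral_add (integrable_const _) (hintZ.const_mul _), integral_const,
      integral_const_mul, hz]
    simp only [measure_univ, probReal_univ, ENNReal.toReal_one, smul_eq_mul, one_mul]
    ring
  have hfinal : 1 + 2 * θ * z / xbar ≤ Real.exp (2 * θ * z / xbar) := by
    have := Real.add_one_le_exp (2 * θ * z / xbar)
    linarith
  linarith
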